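/- arXiv:1708.01421 — 2 statements merged into one kernel-verified Lean document; each statement's English description precedes it below -/
import Mathlib

section
/- Let C(n,m) := n!·[x^n]( e^x·(−log(1 − x))^m / m! ), i.e., C(n,m) = Σ_{k} binom(n,k)·|s|(k,m) where |s| are the unsigned Stirling numbers of the first kind (entries of the Sheffer triangle (e^s, −log(1 − s)), the coefficient triangle of the Charlier polynomials). Then in ℚ[[t]] one has Σ_{m≥0} C(m+2, m)·t^m = (1 + 3t − t^2)/(1 − t)^5; equivalently, (1 − t)^5 · Σ_{m≥0} C(m+2,m)·t^m = 1 + 3t − t^2. -/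
open PowerSeries

/-- The formal power series `−log(1 − x) = Σ_{n≥1} x^n/n` over `ℚ`. -/
noncomputable def negLogOneSub : ℚ⟦X⟧ :=
  PowerSeries.mk fun n => if n = 0 then 0 else 1 / (n : ℚ)

/-- The entries of the Sheffer triangle `(e^s, −log(1 − s))` (product of Pascal's
triangle with the unsigned Stirling1 triangle; the coefficient triangle of the
Charlier polynomials): `C(n,m) = n!·[x^n](e^x·(−log(1 − x))^m / m!)`. -/
noncomputable def charlier (n m : ℕ) : ℚ :=
  (n.factorial : ℚ) * coeff n (exp ℚ * negLogOneSub ^ m) / m.factorial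

lemma coeff_negLog (n : ℕ) :
    coeff n negLogOneSub = if n = 0 then 0 else 1 / (n : ℚ) := by
  simp [negLogOneSub]

lemma coeff_P_zero (m n : ℕ) (h : n < m) :
    coeff n (exp ℚ * negLogOneSub ^ m) = 0 := by
  have hX : (X : ℚ⟦X⟧) ∣ negLogOneSub := by
    rw [PowerSeries.X_dvd_iff]
    simp [negLogOneSub]
  have hd : (X : ℚ⟦X⟧) ^ m ∣ exp ℚ * negLogOneSub ^ m :=
    Dvd.dvd.mul_left (pow_dvd_pow_of_dvd hX m) _
  exact (PowerSeries.X_pow_dvd_iff.mp hd) n h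

lemma key (m : ℕ) :
    coeff m (exp ℚ * negLogOneSub ^ m) = 1 ∧
    coeff (m + 1) (exp ℚ * negLogOneSub ^ m) = 1 + m / 2 ∧
    coeff (m + 2) (exp ℚ * negLogOneSub ^ m) = 1 / 2 + 5 * m / 6 + m * (m - 1) / 8 := by
  induction m with
  | zero =>
    norm_num [PowerSeries.coeff_exp]
  | succ m ih =>
    obtain ⟨h0, h1, h2⟩ := ih
    have hprod : exp ℚ * negLogOneSub ^ (m + 1)
        = negLogOneSub * (exp ℚ * negLogOneSub ^ m) := by ring
    have conv : ∀ i : ℕ, i ≤ 2 →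
        coeff (m + 1 + i) (exp ℚ * negLogOneSub ^ (m + 1)) =
          ∑ k ∈ Finset.range (i + 2),
            coeff k negLogOneSub * coeff (m + 1 + i - k) (exp ℚ * negLogOneSub ^ m) := by
      intro i hi
      rw [hprod, PowerSeries.coeff_mul, Finset.Nat.sum_antidiagonal_eq_sum_range_succ_mk]
      refine (Finset.sum_subset (Finset.range_subset_range.mpr (by omega)) ?_).symm
      intro x hx hx'
      simp only [Finset.mem_range] at hx hx'
      have : m + 1 + i - x < m := by omega
      rw [coeff_P_zero m _ this, mul_zero]
    refine ⟨?_, ?_, ?_⟩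
    · have := conv 0 (by norm_num)
      simp only [Finset.sum_range_succ, Finset.sum_range_zero] at this
      rw [show m + 1 + 0 = m + 1 from rfl] at this
      rw [this, show m + 1 - 1 = m from by omega, h0]
      norm_num [coeff_negLog]
    · have := conv 1 (by norm_num)
      simp only [Finset.sum_range_succ, Finset.sum_range_zero] at this
      rw [show m + 1 + 1 = m + 2 from rfl] at this
      rw [this, show m + 2 - 1 = m + 1 from by omega, show m + 2 - 2 = m from by omega,
        h0, h1]
      rw [coeff_negLog, coeff_negLog, coeff_negLog]
      norm_num
      ring
    · have := conv 2 (by norm_num)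
      simp only [Finset.sum_range_succ, Finset.sum_range_zero] at this
      rw [show m + 1 + 2 = m + 3 from rfl] at this
      rw [this, show m + 3 - 1 = m + 2 from by omega, show m + 3 - 2 = m + 1 from by omega,
        show m + 3 - 3 = m from by omega, h0, h1, h2]
      rw [coeff_negLog, coeff_negLog, coeff_negLog, coeff_negLog]
      norm_num
      ring

lemma charlier_eq (m : ℕ) :
    charlier (m + 2) m = ((m : ℚ) + 2) * ((m : ℚ) + 1) * (3 * m ^ 2 + 17 * m + 12) / 24 := by
  unfold charlier
  rw [(key m).2.2]
  have hfac : ((m + 2).factorial : ℚ) = ((m : ℚ) + 2) * ((m : ℚ) + 1) * (m.factorial : ℚ) := by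
    rw [Nat.factorial_succ, Nat.factorial_succ]
    push_cast
    ring
  have hm : (m.factorial : ℚ) ≠ 0 := by positivity
  rw [hfac]
  field_simp
  ring

/-- The o.g.f. of the third (`d = 2`) diagonal of the Sheffer triangle
`(e^s, −log(1 − s))`: `Σ_m C(m+2,m)·t^m = (1 + 3t − t^2)/(1 − t)^5`, stated in the
equivalent form `(1 − t)^5 · Σ_m C(m+2,m)·t^m = 1 + 3t − t^2` in `ℚ[[t]]`. -/
theorem charlier_diagonal_two_ogf :
    (1 - PowerSeries.X : ℚ⟦X⟧) ^ 5 * PowerSeries.mk (fun m => charlier (m + 2) m)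
      = 1 + 3 * PowerSeries.X - PowerSeries.X ^ 2 := by
  have hmk : PowerSeries.mk (fun m => charlier (m + 2) m)
      = PowerSeries.mk (fun m => ((m : ℚ) + 2) * ((m : ℚ) + 1) * (3 * m ^ 2 + 17 * m + 12) / 24) := by
    ext n
    simp [charlier_eq]
  rw [hmk]
  set g : ℕ → ℚ := fun m => ((m : ℚ) + 2) * ((m : ℚ) + 1) * (3 * m ^ 2 + 17 * m + 12) / 24 with hg
  have hL : (1 - X : ℚ⟦X⟧) ^ 5 * PowerSeries.mk g =
      PowerSeries.mk g - C (5 : ℚ) * (PowerSeries.mk g * X ^ 1)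
        + C (10 : ℚ) * (PowerSeries.mk g * X ^ 2) - C (10 : ℚ) * (PowerSeries.mk g * X ^ 3)
        + C (5 : ℚ) * (PowerSeries.mk g * X ^ 4) - PowerSeries.mk g * X ^ 5 := by
    simp only [map_ofNat]
    ring
  have hR : (1 + 3 * X - X ^ 2 : ℚ⟦X⟧) = 1 + C (3 : ℚ) * X ^ 1 - X ^ 2 := by
    simp only [map_ofNat]
    ring
  rw [hL, hR]
  ext n
  simp only [map_sub, map_add, PowerSeries.coeff_C_mul, PowerSeries.coeff_mul_X_pow',
    coeff_mk, PowerSeries.coeff_one, PowerSeries.coeff_X_pow]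
  rcases n with _|_|_|_|_|n
  · norm_num [hg]
  · norm_num [hg]
  · norm_num [hg]
  · norm_num [hg]
  · norm_num [hg]
  · have e1 : n + 5 - 1 = n + 4 := by omega
    have e2 : n + 5 - 2 = n + 3 := by omega
    have e3 : n + 5 - 3 = n + 2 := by omega
    have e4 : n + 5 - 4 = n + 1 := by omega
    have e5 : n + 5 - 5 = n := by omega
    have h1 : (1:ℕ) ≤ n + 5 := by omega
    have h2 : (2:ℕ) ≤ n + 5 := by omega
    have h3 : (3:ℕ) ≤ n + 5 := by omega
    have h4 : (4:ℕ) ≤ n + 5 := by omega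
    have h5' : (5:ℕ) ≤ n + 5 := by omega
    simp only [if_pos h1, if_pos h2, if_pos h3, if_pos h4, if_pos h5', e1, e2, e3, e4, e5, hg]
    have hne1 : ¬ (n + 5 = 0) := by omega
    have hne2 : ¬ (n + 5 = 1) := by omega
    have hne3 : ¬ (n + 5 = 2) := by omega
    simp only [if_neg hne1, if_neg hne2, if_neg hne3]
    rw [PowerSeries.coeff_C, if_neg (by omega : ¬ n + 4 = 0)]
    push_cast
    ring
end

section
/- Let g(x) := Σ_{n≥0} binom(2n,n)·x^n/2^n (the formal series (1 − 2x)^{−1/2}) and f(x) := Σ_{n≥1} 2^{n−1}·x^n/n (the formal series −(1/2)·log(1 − 2x)), and let S(n,m) := n!·[x^n]( g(x)·f(x)^m / m! ) be the entries of the generalized signless Stirling1 Sheffer triangle (OEIS A028338). Then in ℚ[[t]] one has Σ_{m≥0} S(m+2, m)·t^m = (3 + 8t + t^2)/(1 − t)^5; equivalently, (1 − t)^5 · Σ_{m≥0} S(m+2,m)·t^m = 3 + 8t + t^2. -/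
open PowerSeries

/-- The formal power series `(1 − 2x)^{−1/2} = Σ_n binom(2n,n)·x^n/2^n` over `ℚ`. -/
noncomputable def gA028338 : ℚ⟦X⟧ :=
  PowerSeries.mk fun n => ((2 * n).choose n : ℚ) / 2 ^ n

/-- The formal power series `−(1/2)·log(1 − 2x) = Σ_{n≥1} 2^{n−1}·x^n/n` over `ℚ`. -/
noncomputable def fA028338 : ℚ⟦X⟧ :=
  PowerSeries.mk fun n => if n = 0 then 0 else (2 : ℚ) ^ (n - 1) / n

/-- The entries of the generalized signless Stirling1 Sheffer triangle A028338,
`((1 − 2s)^{−1/2}, −(1/2)log(1 − 2s))`: `S(n,m) = n!·[x^n](g(x)·f(x)^m / m!)`. -/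
noncomputable def A028338 (n m : ℕ) : ℚ :=
  (n.factorial : ℚ) * coeff n (gA028338 * fA028338 ^ m) / m.factorial

noncomputable def hA : ℚ⟦X⟧ := PowerSeries.mk fun n => (2:ℚ)^n / (n+1)

lemma fX : fA028338 = PowerSeries.X * hA := by
  ext n
  cases n with
  | zero => simp [hA, fA028338]
  | succ k => simp [hA, fA028338, coeff_succ_X_mul]

lemma hA0 : constantCoeff hA = 1 := by simp [hA]
lemma hA1 : coeff 1 hA = 1 := by norm_num [hA]
lemma hA2 : coeff 2 hA = 4/3 := by norm_num [hA]
lemma g0 : coeff 0 gA028338 = 1 := by norm_num [gA028338]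
lemma g1 : coeff 1 gA028338 = 1 := by norm_num [gA028338]
lemma g2 : coeff 2 gA028338 = 3/2 := by
  rw [gA028338, coeff_mk]; norm_num [show (2*2).choose 2 = 6 from rfl]

lemma hpow0 (m : ℕ) : coeff 0 (hA ^ m) = 1 := by
  rw [coeff_zero_eq_constantCoeff, map_pow, hA0, one_pow]

lemma hpow1 (m : ℕ) : coeff 1 (hA ^ m) = m := by
  induction m with
  | zero => simp
  | succ k ih =>
    rw [pow_succ, coeff_mul, Finset.Nat.sum_antidiagonal_eq_sum_range_succ_mk]
    simp [Finset.sum_range_succ, ih, hA1, hpow0, coeff_zero_eq_constantCoeff, hA0]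
    ring

lemma hpow2 (m : ℕ) : coeff 2 (hA ^ m) = 4*m/3 + m*(m-1)/2 := by
  induction m with
  | zero => simp
  | succ k ih =>
    rw [pow_succ, coeff_mul, Finset.Nat.sum_antidiagonal_eq_sum_range_succ_mk]
    simp [Finset.sum_range_succ, ih, hA1, hA2, hpow0, hpow1, coeff_zero_eq_constantCoeff, hA0]
    ring

lemma a_eq (m : ℕ) :
    A028338 (m + 2) m = ((m:ℚ)+1)*((m:ℚ)+2)*(3*(m:ℚ)^2+11*(m:ℚ)+9)/6 := by
  have key : coeff (m+2) (gA028338 * fA028338 ^ m)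
      = coeff 2 (gA028338 * hA ^ m) := by
    rw [fX, mul_pow, show gA028338 * (PowerSeries.X ^ m * hA ^ m)
        = PowerSeries.X ^ m * (gA028338 * hA ^ m) by ring,
      show m + 2 = 2 + m by omega, coeff_X_pow_mul]
  have c2 : coeff 2 (gA028338 * hA ^ m) = 4*m/3 + m*(m-1)/2 + m + 3/2 := by
    rw [coeff_mul, Finset.Nat.sum_antidiagonal_eq_sum_range_succ_mk]
    simp [Finset.sum_range_succ, g0, g1, g2, hpow0, hpow1, hpow2]
  have hm : (m.factorial : ℚ) ≠ 0 := by exact_mod_cast m.factorial_ne_zero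
  rw [A028338, key, c2, show (m+2).factorial = (m+2)*((m+1)*m.factorial) by
    rw [Nat.factorial_succ, Nat.factorial_succ]]
  push_cast
  field_simp
  ring

/-- The o.g.f. of the third (`d = 2`) diagonal of the triangle A028338:
`Σ_m S(m+2,m)·t^m = (3 + 8t + t^2)/(1 − t)^5`, stated in the equivalent form
`(1 − t)^5 · Σ_m S(m+2,m)·t^m = 3 + 8t + t^2` in `ℚ[[t]]`. -/
theorem A028338_diagonal_two_ogf :
    (1 - PowerSeries.X : ℚ⟦X⟧) ^ 5 * PowerSeries.mk (fun m => A028338 (m + 2) m)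
      = 3 + 8 * PowerSeries.X + PowerSeries.X ^ 2 := by
  set A : ℚ⟦X⟧ := PowerSeries.mk (fun m => A028338 (m + 2) m) with hAdef
  have expand : (1 - PowerSeries.X : ℚ⟦X⟧) ^ 5 * A
      = A - C 5 * (PowerSeries.X ^ 1 * A) + C 10 * (PowerSeries.X ^ 2 * A)
        - C 10 * (PowerSeries.X ^ 3 * A) + C 5 * (PowerSeries.X ^ 4 * A)
        - PowerSeries.X ^ 5 * A := by
    rw [map_ofNat, map_ofNat]; ring
  have rhs : (3 + 8 * PowerSeries.X + PowerSeries.X ^ 2 : ℚ⟦X⟧)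
      = C 3 + C 8 * PowerSeries.X ^ 1 + PowerSeries.X ^ 2 := by
    rw [map_ofNat, map_ofNat]; ring
  rw [expand, rhs]
  ext n
  simp only [map_sub, map_add, coeff_C_mul, coeff_X_pow_mul', coeff_mk, coeff_C,
    coeff_X_pow, hAdef]
  rcases n with _ | _ | _ | _ | _ | n
  · norm_num [a_eq]
  · norm_num [a_eq]
  · norm_num [a_eq]
  · norm_num [a_eq]
  · norm_num [a_eq]
  · rw [if_pos (by omega : 1 ≤ n+5), if_pos (by omega : 2 ≤ n+5),
      if_pos (by omega : 3 ≤ n+5), if_pos (by omega : 4 ≤ n+5),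
      if_pos (by omega : 5 ≤ n+5), if_neg (by omega : ¬(n+5) = 0),
      if_neg (by omega : ¬(n+5) = 1), if_neg (by omega : ¬(n+5) = 2),
      show n+5-1 = n+4 by omega, show n+5-2 = n+3 by omega,
      show n+5-3 = n+2 by omega, show n+5-4 = n+1 by omega,
      show n+5-5 = n by omega]
    simp only [a_eq]
    push_cast
    ring
end
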